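/- Let M₀ and M₁ be normal topological spaces, U_i ⊆ M_i open, Z_i ⊆ M_i closed with Z_i ⊆ U_i, and let G : U₀ → U₁ be a homeomorphism with G(Z₀) = Z₁. Then there exist open neighbourhoods V₀ of Z₀ and V₁ := G(V₀) of Z₁ such that for i = 0,1 one has Z_i ⊆ V_i ⊆ cl_{M_i}(V_i) ⊆ U_i, and moreover cl_{M₁}(V₁) = G(cl_{M₀}(V₀)). -/

import Mathlib

/-- Let `M₀`, `M₁` be normal topological spaces, `Uᵢ ⊆ Mᵢ` open,
`Zᵢ ⊆ Mᵢ` closed with `Zᵢ ⊆ Uᵢ`, and `G : U₀ → U₁` a homeomorphism (of the subspaces)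
with `G(Z₀) = Z₁`.  Then there exist open neighbourhoods `V₀` of `Z₀` and
`V₁ := G(V₀)` of `Z₁` such that `Zᵢ ⊆ Vᵢ ⊆ cl_{Mᵢ}(Vᵢ) ⊆ Uᵢ` for `i = 0,1`, and
moreover `cl_{M₁}(V₁) = G(cl_{M₀}(V₀))`. -/
theorem closed_in_open_with_homeo_nbhd
    {M₀ M₁ : Type*} [TopologicalSpace M₀] [TopologicalSpace M₁]
    [NormalSpace M₀] [NormalSpace M₁]
    (U₀ : Set M₀) (U₁ : Set M₁) (hU₀ : IsOpen U₀) (hU₁ : IsOpen U₁)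
    (Z₀ : Set M₀) (Z₁ : Set M₁) (hZ₀ : IsClosed Z₀) (hZ₁ : IsClosed Z₁)
    (hZU₀ : Z₀ ⊆ U₀) (hZU₁ : Z₁ ⊆ U₁)
    (G : U₀ ≃ₜ U₁)
    (hGZ : (fun x : U₀ => (G x : M₁)) '' {x : U₀ | (x : M₀) ∈ Z₀} = Z₁) :
    ∃ V₀ : Set M₀, IsOpen V₀ ∧ Z₀ ⊆ V₀ ∧ V₀ ⊆ U₀ ∧ closure V₀ ⊆ U₀ ∧
      ∀ V₁ : Set M₁,
        V₁ = (fun x : U₀ => (G x : M₁)) '' {x : U₀ | (x : M₀) ∈ V₀} →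
        IsOpen V₁ ∧ Z₁ ⊆ V₁ ∧ V₁ ⊆ U₁ ∧ closure V₁ ⊆ U₁ ∧
          closure V₁ =
            (fun x : U₀ => (G x : M₁)) '' {x : U₀ | (x : M₀) ∈ closure V₀} := by
  classical
  set g : U₀ → M₁ := fun x => (G x : M₁) with hg
  have hgcont : Continuous g := continuous_subtype_val.comp G.continuous
  -- step 1 : open A₁ with Z₁ ⊆ A₁, closure A₁ ⊆ U₁
  obtain ⟨A₁, hA₁o, hZA₁, hclA₁⟩ := normal_exists_closure_subset hZ₁ hU₁ hZU₁
  -- step 2 : W := image in M₀ of g ⁻¹' A₁, open nbhd of Z₀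
  set Wₛ : Set U₀ := g ⁻¹' A₁ with hWs
  set W : Set M₀ := Subtype.val '' Wₛ with hW
  have hWo : IsOpen W := hU₀.isOpenMap_subtype_val _ (hA₁o.preimage hgcont)
  have hZW : Z₀ ⊆ W := by
    intro z hz
    refine ⟨⟨z, hZU₀ hz⟩, ?_, rfl⟩
    have : g ⟨z, hZU₀ hz⟩ ∈ Z₁ := by
      rw [← hGZ]; exact ⟨⟨z, hZU₀ hz⟩, hz, rfl⟩
    exact hZA₁ this
  have hWU₀ : W ⊆ U₀ := by rintro x ⟨y, -, rfl⟩; exact y.2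
  -- step 3 : V₀
  obtain ⟨V₀, hV₀o, hZV₀, hclV₀W⟩ := normal_exists_closure_subset hZ₀ hWo hZW
  have hV₀U₀ : V₀ ⊆ U₀ := (subset_closure.trans hclV₀W).trans hWU₀
  have hclV₀U₀ : closure V₀ ⊆ U₀ := hclV₀W.trans hWU₀
  refine ⟨V₀, hV₀o, hZV₀, hV₀U₀, hclV₀U₀, ?_⟩
  intro V₁ hV₁
  -- basic notations
  set T : Set M₀ := closure V₀ with hT
  set C : Set M₁ := g '' {x : U₀ | (x : M₀) ∈ T} with hC
  have hCU₁ : C ⊆ U₁ := by rintro y ⟨x, -, rfl⟩; exact (G x).2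
  have hV₁C : V₁ ⊆ C := by
    rw [hV₁]; exact Set.image_mono fun x hx => subset_closure hx
  have hCA₁ : C ⊆ A₁ := by
    rintro y ⟨x, hx, rfl⟩
    obtain ⟨x', hx', hxx'⟩ := hclV₀W hx
    have : x' = x := Subtype.ext hxx'
    exact this ▸ hx'
  have hclCU₁ : closure C ⊆ U₁ := (closure_mono hCA₁).trans hclA₁
  -- subtype preimage descriptions
  have hpre₀ : ∀ S : Set M₀, {x : U₀ | (x : M₀) ∈ S} = Subtype.val ⁻¹' S := fun _ => rfl
  -- closure of val⁻¹' V₀ in U₀ is val⁻¹' closure V₀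
  have hval₀ : Topology.IsEmbedding (Subtype.val : U₀ → M₀) := Topology.IsEmbedding.subtypeVal
  have hval₁ : Topology.IsEmbedding (Subtype.val : U₁ → M₁) := Topology.IsEmbedding.subtypeVal
  have himV₀ : (Subtype.val : U₀ → M₀) '' (Subtype.val ⁻¹' V₀) = V₀ := by
    rw [Subtype.image_preimage_coe, Set.inter_eq_right.mpr hV₀U₀]
  have hclsub : closure (Subtype.val ⁻¹' V₀ : Set U₀) = Subtype.val ⁻¹' T := by
    rw [hval₀.closure_eq_preimage_closure_image, himV₀]
  -- C is closed: C = closure C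
  have hGimg : ∀ S : Set U₀, g '' S = Subtype.val '' (⇑G '' S) := by
    intro S; rw [Set.image_image]
  have hCclosed : IsClosed C := by
    have hTclosed : IsClosed (Subtype.val ⁻¹' T : Set U₀) := isClosed_closure.preimage continuous_subtype_val
    have hGT : IsClosed (⇑G '' (Subtype.val ⁻¹' T) : Set U₁) := (G.isClosedMap) _ hTclosed
    -- in subtype U₁ : val ⁻¹' C = G '' (val⁻¹' T)
    have hpreC : (Subtype.val ⁻¹' C : Set U₁) = ⇑G '' (Subtype.val ⁻¹' T) := by
      ext y
      constructor
      · rintro ⟨x, hx, hxy⟩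
        refine ⟨x, hx, Subtype.ext hxy⟩
      · rintro ⟨x, hx, rfl⟩
        exact ⟨x, hx, rfl⟩
    have hkey : (Subtype.val ⁻¹' C : Set U₁) = Subtype.val ⁻¹' closure C := by
      have h2 : (Subtype.val : U₁ → M₁) '' (⇑G '' (Subtype.val ⁻¹' T)) = C := (hGimg _).symm
      rw [hpreC, ← hGT.closure_eq, hval₁.closure_eq_preimage_closure_image, h2]
    have : C = closure C := by
      have h1 := congrArg (Set.image (Subtype.val : U₁ → M₁)) hkey
      rwa [Subtype.image_preimage_coe, Subtype.image_preimage_coe,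
        Set.inter_eq_right.mpr hCU₁, Set.inter_eq_right.mpr hclCU₁] at h1
    rw [this]; exact isClosed_closure
  -- closure V₁ = C
  have hclV₁ : closure V₁ = C := by
    apply Set.Subset.antisymm
    · exact closure_minimal hV₁C hCclosed
    · -- C ⊆ closure V₁
      have : C = Subtype.val '' (⇑G '' closure (Subtype.val ⁻¹' V₀ : Set U₀)) := by
        rw [hclsub, ← hGimg]; rfl
      rw [this, G.image_closure, hval₁.closure_eq_preimage_closure_image,
        Subtype.image_preimage_coe]
      have : (Subtype.val : U₁ → M₁) '' (⇑G '' (Subtype.val ⁻¹' V₀)) = V₁ := by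
        rw [← hGimg, hV₁]; rfl
      rw [this]
      exact Set.inter_subset_right
  refine ⟨?_, ?_, ?_, ?_, hclV₁⟩
  · -- open
    rw [hV₁, hpre₀, hGimg]
    exact hU₁.isOpenMap_subtype_val _ (G.isOpenMap _ (hV₀o.preimage continuous_subtype_val))
  · rw [← hGZ, hV₁]; exact Set.image_mono fun x hx => hZV₀ hx
  · exact hV₁C.trans hCU₁
  · rw [hclV₁]; exact hCU₁
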